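/- arXiv:2605.08072 — 2 statements merged into one kernel-verified Lean document; each statement's English description precedes it below -/
import Mathlib

section
/- Let d ∈ ℕ and let f, g, p : ℝ^d → ℝ be measurable functions such that f takes values in {−1,1}, |g(x)| ≤ 1 for all x, g ∈ L²(γ_d), p ∈ L²(γ_d), and ‖p‖_{L²(γ_d)} ≤ 1. Define q = (1/4)·(1 + p)². Then ‖q − (g+1)/2‖_{L¹(γ_d)} ≤ ‖p − g‖_{L²(γ_d)} + (1/2)·‖f − g‖_{L¹(γ_d)}. -/
open MeasureTheory ProbabilityTheory Real
open scoped ENNReal NNReal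

/-- The standard Gaussian measure on `ℝ^d`, as the `d`-fold product of the
standard Gaussian measure on `ℝ`. -/
noncomputable def gaussPi (d : ℕ) : Measure (Fin d → ℝ) :=
  Measure.pi fun _ => gaussianReal 0 1

/-- If `f` takes values in `{-1,1}`, `|g| ≤ 1` everywhere,
`g, p ∈ L²(γ_d)` with `‖p‖_{L²(γ_d)} ≤ 1`, and `q = (1/4)·(1 + p)²`, then
`‖q - (g+1)/2‖_{L¹(γ_d)} ≤ ‖p - g‖_{L²(γ_d)} + (1/2)·‖f - g‖_{L¹(γ_d)}`. -/
theorem q_close_to_smoothed (d : ℕ) (f g p : (Fin d → ℝ) → ℝ)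
    (hfm : Measurable f) (hgm : Measurable g) (hpm : Measurable p)
    (hf : ∀ x, f x = 1 ∨ f x = -1) (hg : ∀ x, |g x| ≤ 1)
    (hgL2 : MemLp g 2 (gaussPi d)) (hpL2 : MemLp p 2 (gaussPi d))
    (hpnorm : eLpNorm p 2 (gaussPi d) ≤ 1)
    (q : (Fin d → ℝ) → ℝ) (hq : q = fun x => (1 / 4) * (1 + p x) ^ 2) :
    eLpNorm (fun x => q x - (g x + 1) / 2) 1 (gaussPi d)
      ≤ eLpNorm (fun x => p x - g x) 2 (gaussPi d)
        + (1 / 2) * eLpNorm (fun x => f x - g x) 1 (gaussPi d) := by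
  set μ := gaussPi d with hμ
  have hprob : IsProbabilityMeasure μ := by rw [hμ]; unfold gaussPi; infer_instance
  set φ : (Fin d → ℝ) → ℝ := fun x => (2 + p x + g x) / 4 with hφ
  set A : (Fin d → ℝ) → ℝ := fun x => φ x * (p x - g x) with hA
  set B : (Fin d → ℝ) → ℝ := fun x => (g x ^ 2 - 1) / 4 with hB
  have hφm : Measurable φ := by fun_prop
  have hAm : Measurable A := by fun_prop
  have hBm : Measurable B := by fun_prop
  have half : (1/2 : ℝ≥0∞) = ENNReal.ofReal (1/2) := by
    rw [one_div, one_div, ENNReal.ofReal_inv_of_pos (by norm_num), ENNReal.ofReal_ofNat]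
  have quarter : (1/4 : ℝ≥0∞) = ENNReal.ofReal (1/4) := by
    rw [one_div, one_div, ENNReal.ofReal_inv_of_pos (by norm_num), ENNReal.ofReal_ofNat]
  have hsum : (fun x => q x - (g x + 1) / 2) = fun x => A x + B x := by
    funext x; simp only [hq, hA, hB, hφ]; ring
  -- step 1: triangle
  have h1 : eLpNorm (fun x => q x - (g x + 1) / 2) 1 μ
      ≤ eLpNorm A 1 μ + eLpNorm B 1 μ := by
    rw [hsum]
    exact eLpNorm_add_le hAm.aestronglyMeasurable hBm.aestronglyMeasurable le_rfl
  -- ‖φ‖₂ ≤ 1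
  have hφ2 : eLpNorm φ 2 μ ≤ 1 := by
    have hsplit : φ = (fun _ => (1/2 : ℝ)) + ((1/4 : ℝ) • p) + ((1/4 : ℝ) • g) := by
      funext x; simp [hφ]; ring
    rw [hsplit]
    have t1 : eLpNorm ((fun _ => (1/2 : ℝ)) + ((1/4 : ℝ) • p) + ((1/4 : ℝ) • g)) 2 μ
        ≤ eLpNorm ((fun _ => (1/2 : ℝ)) + ((1/4 : ℝ) • p)) 2 μ
          + eLpNorm ((1/4 : ℝ) • g) 2 μ := by
      refine eLpNorm_add_le ?_ ?_ (by norm_num)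
      · exact (aestronglyMeasurable_const.add (hpm.aestronglyMeasurable.const_smul _))
      · exact hgm.aestronglyMeasurable.const_smul _
    have t2 : eLpNorm ((fun _ => (1/2 : ℝ)) + ((1/4 : ℝ) • p)) 2 μ
        ≤ eLpNorm (fun _ => (1/2 : ℝ)) 2 μ + eLpNorm ((1/4 : ℝ) • p) 2 μ :=
      eLpNorm_add_le aestronglyMeasurable_const
        (hpm.aestronglyMeasurable.const_smul _) (by norm_num)
    have c1 : eLpNorm (fun _ : (Fin d → ℝ) => (1/2 : ℝ)) 2 μ = 1/2 := by
      rw [eLpNorm_const _ (by norm_num) (NeZero.ne μ)]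
      simp
      rw [Real.enorm_eq_ofReal (by norm_num), ENNReal.ofReal_ofNat]
    have c2 : eLpNorm ((1/4 : ℝ) • p) 2 μ ≤ 1/4 := by
      rw [eLpNorm_const_smul]
      calc (‖(1/4 : ℝ)‖₊ : ℝ≥0∞) * eLpNorm p 2 μ ≤ (‖(1/4 : ℝ)‖₊ : ℝ≥0∞) * 1 := by
            gcongr
        _ = 1/4 := by simp
    have c3 : eLpNorm ((1/4 : ℝ) • g) 2 μ ≤ 1/4 := by
      have hb : ∀ᵐ x ∂μ, ‖((1/4 : ℝ) • g) x‖ ≤ (1/4 : ℝ) := by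
        filter_upwards with x
        simp only [Pi.smul_apply, smul_eq_mul, norm_mul, Real.norm_eq_abs]
        calc |(1:ℝ)/4| * |g x| ≤ |(1:ℝ)/4| * 1 := by gcongr; exact hg x
          _ = 1/4 := by norm_num
      calc eLpNorm ((1/4 : ℝ) • g) 2 μ
          ≤ μ Set.univ ^ (2 : ℝ≥0∞).toReal⁻¹ * ENNReal.ofReal (1/4) :=
            eLpNorm_le_of_ae_bound hb
        _ = 1/4 := by rw [measure_univ, ENNReal.one_rpow, one_mul, ← quarter]
    calc eLpNorm ((fun _ => (1/2 : ℝ)) + ((1/4 : ℝ) • p) + ((1/4 : ℝ) • g)) 2 μ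
        ≤ eLpNorm (fun _ => (1/2:ℝ)) 2 μ + eLpNorm ((1/4:ℝ) • p) 2 μ
            + eLpNorm ((1/4:ℝ) • g) 2 μ := t1.trans (add_le_add_left t2 _)
      _ ≤ 1/2 + 1/4 + 1/4 := by rw [c1]; gcongr
      _ = 1 := by
          rw [half, quarter, ← ENNReal.ofReal_add (by norm_num) (by norm_num),
            ← ENNReal.ofReal_add (by norm_num) (by norm_num)]
          norm_num
  -- step 2: Hölder for A
  have h2 : eLpNorm A 1 μ ≤ eLpNorm (fun x => p x - g x) 2 μ := by
    have hh := eLpNorm_smul_le_mul_eLpNorm (f := fun x => p x - g x)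
      (φ := φ) (p := 2) (q := 2) (r := 1) (μ := μ)
      ((hpm.sub hgm).aestronglyMeasurable) hφm.aestronglyMeasurable
    calc eLpNorm A 1 μ = eLpNorm (φ • fun x => p x - g x) 1 μ := rfl
      _ ≤ eLpNorm φ 2 μ * eLpNorm (fun x => p x - g x) 2 μ := hh
      _ ≤ 1 * eLpNorm (fun x => p x - g x) 2 μ := by gcongr
      _ = _ := one_mul _
  -- step 3: bound B pointwise
  have h3 : eLpNorm B 1 μ ≤ (1/2) * eLpNorm (fun x => f x - g x) 1 μ := by
    have hpt : ∀ x, ‖B x‖ ≤ ‖((1/2 : ℝ) • fun x => f x - g x) x‖ := by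
      intro x
      simp only [hB, Pi.smul_apply, smul_eq_mul, Real.norm_eq_abs]
      have hg1 := (abs_le.mp (hg x)).1
      have hg2 := (abs_le.mp (hg x)).2
      have hsq : g x ^ 2 ≤ 1 := by nlinarith
      rcases hf x with h | h <;> rw [h]
      · rw [abs_of_nonpos (by nlinarith), abs_of_nonneg (by nlinarith)]
        nlinarith
      · rw [abs_of_nonpos (by nlinarith), abs_of_nonpos (by nlinarith)]
        nlinarith
    calc eLpNorm B 1 μ ≤ eLpNorm ((1/2 : ℝ) • fun x => f x - g x) 1 μ :=
          eLpNorm_mono hpt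
      _ = (1/2) * eLpNorm (fun x => f x - g x) 1 μ := by
          rw [eLpNorm_const_smul]
          rw [Real.enorm_eq_ofReal (by norm_num), ← half]
  exact h1.trans (add_le_add h2 h3)
end

section
/- Let d ∈ ℕ and let f, g, p : ℝ^d → ℝ be measurable functions such that f takes values in {−1,1}, |g(x)| ≤ 1 for all x, g ∈ L²(γ_d), p ∈ L²(γ_d), and ‖p‖_{L²(γ_d)} ≤ 1. Define q = (1/4)·(1 + p)² and h = (f + 1)/2 (so h is {0,1}-valued). Then q(x) ≥ 0 for all x ∈ ℝ^d and ‖q − h‖_{L¹(γ_d)} ≤ ‖p − g‖_{L²(γ_d)} + ‖f − g‖_{L¹(γ_d)}. -/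
open MeasureTheory ProbabilityTheory Real ENNReal

instance (d : ℕ) : IsProbabilityMeasure (gaussPi d) := by
  unfold gaussPi; infer_instance

/-- If `f` takes values in `{-1,1}`, `|g| ≤ 1` everywhere,
`g, p ∈ L²(γ_d)` with `‖p‖_{L²(γ_d)} ≤ 1`, `q = (1/4)·(1 + p)²` and
`h = (f + 1)/2`, then `q ≥ 0` everywhere and
`‖q - h‖_{L¹(γ_d)} ≤ ‖p - g‖_{L²(γ_d)} + ‖f - g‖_{L¹(γ_d)}`. -/
theorem q_close_to_indicator (d : ℕ) (f g p : (Fin d → ℝ) → ℝ)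
    (hfm : Measurable f) (hgm : Measurable g) (hpm : Measurable p)
    (hf : ∀ x, f x = 1 ∨ f x = -1) (hg : ∀ x, |g x| ≤ 1)
    (hgL2 : MemLp g 2 (gaussPi d)) (hpL2 : MemLp p 2 (gaussPi d))
    (hpnorm : eLpNorm p 2 (gaussPi d) ≤ 1)
    (q : (Fin d → ℝ) → ℝ) (hq : q = fun x => (1 / 4) * (1 + p x) ^ 2)
    (h : (Fin d → ℝ) → ℝ) (hh : h = fun x => (f x + 1) / 2) :
    (∀ x, 0 ≤ q x) ∧
    eLpNorm (fun x => q x - h x) 1 (gaussPi d)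
      ≤ eLpNorm (fun x => p x - g x) 2 (gaussPi d)
        + eLpNorm (fun x => f x - g x) 1 (gaussPi d) := by
  set μ := gaussPi d
  constructor
  · intro x
    rw [hq]
    positivity
  set A : (Fin d → ℝ) → ℝ := fun x => (p x - g x) * ((2 + p x + g x) / 4) with hA
  set B : (Fin d → ℝ) → ℝ := fun x => (1 / 4) * ((1 + g x) ^ 2 - (1 + f x) ^ 2) with hB
  have hdecomp : (fun x => q x - h x) = fun x => A x + B x := by
    funext x
    rw [hq, hh, hA, hB]
    rcases hf x with hfx | hfx <;> simp only [hfx] <;> ring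
  have hAm : Measurable A :=
    (hpm.sub hgm).mul (((measurable_const.add hpm).add hgm).div_const 4)
  have hBm : Measurable B :=
    Measurable.const_mul
      (((measurable_const.add hgm).pow_const 2).sub
        ((measurable_const.add hfm).pow_const 2)) _
  -- Bound on the A part (Hölder)
  have holder :
      eLpNorm A 1 μ
        ≤ eLpNorm (fun x => p x - g x) 2 μ
          * eLpNorm (fun x => (2 + p x + g x) / 4) 2 μ := by
    refine (eLpNorm_le_eLpNorm_mul_eLpNorm'_of_norm (p := 2) (q := 2) (r := 1)
      (hpm.sub hgm).aestronglyMeasurable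
      (((measurable_const.add hpm).add hgm).div_const 4).aestronglyMeasurable
      (fun a b => a * b) 1 ?_).trans_eq (by rw [ENNReal.coe_one, one_mul]; rfl)
    · filter_upwards with x
      simp [abs_mul, le_refl]
  -- The second Hölder factor is at most 1
  have hφ : eLpNorm (fun x => (2 + p x + g x) / 4) 2 μ ≤ 1 := by
    have hsplit : (fun x => (2 + p x + g x) / 4)
        = fun x => ((2 + g x) / 4) + (p x / 4) := by
      funext x; ring
    rw [hsplit]
    have h1 : eLpNorm (fun x => (2 + g x) / 4) 2 μ ≤ 3 / 4 := by
      have hb : ∀ᵐ x ∂μ, ‖(2 + g x) / 4‖ ≤ (3 : ℝ) / 4 := by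
        filter_upwards with x
        rw [Real.norm_eq_abs, abs_div, abs_of_pos (by norm_num : (0:ℝ) < 4)]
        have hgx := hg x
        have h2 : |2 + g x| ≤ 3 := by
          rw [abs_le] at hgx ⊢
          constructor <;> linarith [hgx.1, hgx.2]
        linarith
      have hbd := eLpNorm_le_of_ae_bound (p := 2) (μ := μ) hb
      rw [measure_univ, ENNReal.one_rpow, one_mul] at hbd
      refine hbd.trans_eq ?_
      rw [ENNReal.ofReal_div_of_pos (by norm_num)]
      norm_num
    have h2 : eLpNorm (fun x => p x / 4) 2 μ ≤ 1 / 4 := by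
      have heq : (fun x => p x / 4) = ((4:ℝ)⁻¹) • p := by
        funext x; simp [div_eq_inv_mul]
      rw [heq, eLpNorm_const_smul]
      have hc : (‖(4:ℝ)⁻¹‖ₑ : ℝ≥0∞) = (4:ℝ≥0∞)⁻¹ := by simp [← ofReal_norm]
      rw [hc, one_div]
      exact mul_le_of_le_one_right' hpnorm
    calc eLpNorm (fun x => ((2 + g x) / 4) + (p x / 4)) 2 μ
        ≤ eLpNorm (fun x => (2 + g x) / 4) 2 μ + eLpNorm (fun x => p x / 4) 2 μ :=
          eLpNorm_add_le
            (((measurable_const.add hgm).div_const 4).aestronglyMeasurable)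
            ((hpm.div_const 4).aestronglyMeasurable) one_le_two
      _ ≤ 3 / 4 + 1 / 4 := add_le_add h1 h2
      _ = 1 := by
          rw [ENNReal.div_add_div_same, show (3:ℝ≥0∞)+1 = 4 by norm_num]
          exact ENNReal.div_self (by norm_num) (by norm_num)
  have hAle : eLpNorm A 1 μ ≤ eLpNorm (fun x => p x - g x) 2 μ :=
    holder.trans (mul_le_of_le_one_right' hφ)
  -- Pointwise bound on the B part
  have hBle : eLpNorm B 1 μ ≤ eLpNorm (fun x => f x - g x) 1 μ := by
    apply eLpNorm_mono
    intro x
    rw [Real.norm_eq_abs, Real.norm_eq_abs, hB]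
    show |(1 / 4 : ℝ) * ((1 + g x) ^ 2 - (1 + f x) ^ 2)| ≤ |f x - g x|
    have key : (1 / 4 : ℝ) * ((1 + g x) ^ 2 - (1 + f x) ^ 2)
        = (g x - f x) * ((2 + g x + f x) / 4) := by ring
    rw [key, abs_mul, abs_sub_comm (g x) (f x)]
    have h2 : |(2 + g x + f x) / 4| ≤ 1 := by
      rw [abs_div, abs_of_pos (by norm_num : (0:ℝ) < 4)]
      have hgx := hg x
      have hfx : |f x| ≤ 1 := by rcases hf x with h' | h' <;> simp [h']
      have habs : |2 + g x + f x| ≤ 4 := by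
        rw [abs_le] at hgx hfx ⊢
        constructor <;> linarith [hgx.1, hgx.2, hfx.1, hfx.2]
      linarith
    calc |f x - g x| * |(2 + g x + f x) / 4|
        ≤ |f x - g x| * 1 := by
          exact mul_le_mul_of_nonneg_left h2 (abs_nonneg _)
      _ = |f x - g x| := mul_one _
  rw [hdecomp]
  calc eLpNorm (fun x => A x + B x) 1 μ
      ≤ eLpNorm A 1 μ + eLpNorm B 1 μ :=
        eLpNorm_add_le hAm.aestronglyMeasurable hBm.aestronglyMeasurable le_rfl
    _ ≤ _ := add_le_add hAle hBle
end
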